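/- arXiv:1908.02112 — 2 statements merged into one kernel-verified Lean document; each statement's English description precedes it below -/
import Mathlib

section
/- For all integers d ≥ 1 and 0 ≤ k ≤ d, one has κ_{d-k}^d ≥ κ_d^{d-k}, where κ_n = π^{n/2}/Γ(1 + n/2) is the volume of the n-dimensional unit ball. Equivalently, Γ(1 + d/2)^{1/d} ≥ Γ(1 + (d-k)/2)^{1/(d-k)} for 0 ≤ k < d. -/
open Real

/-- `κ n`, the volume of the `n`-dimensional unit ball. -/
noncomputable def unitBallVol (n : ℕ) : ℝ := π ^ ((n : ℝ) / 2) / Real.Gamma (1 + (n : ℝ) / 2)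

/-- Key convexity inequality: `d * log Γ(1+m/2) ≤ m * log Γ(1+d/2)` for `0 ≤ m ≤ d`. -/
lemma key_logGamma (m d : ℝ) (hm : 0 ≤ m) (hmd : m ≤ d) (hd : 0 < d) :
    d * Real.log (Real.Gamma (1 + m / 2)) ≤ m * Real.log (Real.Gamma (1 + d / 2)) := by
  have hc := Real.convexOn_log_Gamma
  have h1 : (1 : ℝ) ∈ Set.Ioi (0 : ℝ) := by norm_num
  have h2 : 1 + d / 2 ∈ Set.Ioi (0 : ℝ) := by simp; linarith
  have hb : 0 ≤ m / d := by positivity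
  have ha : 0 ≤ 1 - m / d := by
    have : m / d ≤ 1 := (div_le_one hd).2 hmd
    linarith
  have hab : (1 - m / d) + m / d = 1 := by ring
  have h := hc.2 h1 h2 ha hb hab
  have hx : (1 - m / d) • (1 : ℝ) + (m / d) • (1 + d / 2) = 1 + m / 2 := by
    field_simp
    have hd' : d * d⁻¹ = 1 := mul_inv_cancel₀ hd.ne'
    linear_combination (m + 2) * hd'
  rw [hx] at h
  simp only [Function.comp_apply, Real.Gamma_one, Real.log_one, smul_eq_mul,
    mul_zero, zero_add] at h
  have := mul_le_mul_of_nonneg_left h hd.le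
  calc d * Real.log (Real.Gamma (1 + m / 2)) ≤ d * (m / d * Real.log (Real.Gamma (1 + d / 2))) := this
    _ = m * Real.log (Real.Gamma (1 + d / 2)) := by field_simp

lemma gamma_pos' (x : ℝ) (hx : 0 ≤ x) : 0 < Real.Gamma (1 + x / 2) :=
  Real.Gamma_pos_of_pos (by linarith)

/-- `Γ(1+m/2)^d ≤ Γ(1+d/2)^m` for naturals `m ≤ d`. -/
lemma gamma_pow_le (m d : ℕ) (hmd : m ≤ d) (hd : 1 ≤ d) :
    Real.Gamma (1 + (m : ℝ) / 2) ^ d ≤ Real.Gamma (1 + (d : ℝ) / 2) ^ m := by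
  have hm0 : (0 : ℝ) ≤ m := Nat.cast_nonneg m
  have hd0 : (0 : ℝ) < d := by exact_mod_cast hd
  have hmd' : (m : ℝ) ≤ d := by exact_mod_cast hmd
  have h := key_logGamma m d hm0 hmd' hd0
  have hgm := gamma_pos' (m : ℝ) hm0
  have hgd := gamma_pos' (d : ℝ) (le_of_lt hd0)
  have h1 : Real.Gamma (1 + (m : ℝ) / 2) ^ d = Real.exp ((d : ℝ) * Real.log (Real.Gamma (1 + (m : ℝ) / 2))) := by
    rw [← Real.rpow_natCast, Real.rpow_def_of_pos hgm, mul_comm]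
  have h2 : Real.Gamma (1 + (d : ℝ) / 2) ^ m = Real.exp ((m : ℝ) * Real.log (Real.Gamma (1 + (d : ℝ) / 2))) := by
    rw [← Real.rpow_natCast, Real.rpow_def_of_pos hgd, mul_comm]
  rw [h1, h2]
  exact Real.exp_le_exp.2 h

/-- For integers `d ≥ 1` and `0 ≤ k ≤ d` one has `κ_{d-k}^d ≥ κ_d^{d-k}`; equivalently,
`Γ(1 + d/2)^(1/d) ≥ Γ(1 + (d-k)/2)^(1/(d-k))` for `0 ≤ k < d`. -/
theorem unitBallVol_pow_ge (d k : ℕ) (hd : 1 ≤ d) (hk : k ≤ d) :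
    unitBallVol (d - k) ^ d ≥ unitBallVol d ^ (d - k) ∧
      (k < d →
        Real.Gamma (1 + (d : ℝ) / 2) ^ (1 / (d : ℝ)) ≥
          Real.Gamma (1 + ((d : ℝ) - (k : ℝ)) / 2) ^ (1 / ((d : ℝ) - (k : ℝ)))) := by
  set m := d - k with hm
  have hmd : m ≤ d := Nat.sub_le d k
  have hcast : ((m : ℕ) : ℝ) = (d : ℝ) - (k : ℝ) := by
    rw [hm]; push_cast [hk]; ring
  have hπ : (0 : ℝ) < π := Real.pi_pos
  have hgm := gamma_pos' (m : ℝ) (Nat.cast_nonneg m)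
  have hgd := gamma_pos' (d : ℝ) (Nat.cast_nonneg d)
  constructor
  · -- power inequality
    have hnum : (π ^ ((m : ℝ) / 2)) ^ d = (π ^ ((d : ℝ) / 2)) ^ m := by
      rw [← Real.rpow_natCast (π ^ ((m : ℝ) / 2)) d, ← Real.rpow_natCast (π ^ ((d : ℝ) / 2)) m,
        ← Real.rpow_mul hπ.le, ← Real.rpow_mul hπ.le]
      ring_nf
    have hden := gamma_pow_le m d hmd hd
    unfold unitBallVol
    rw [div_pow, div_pow, hnum]
    apply div_le_div_of_nonneg_left _ (pow_pos hgm d) hden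
    · positivity
  · intro hkd
    have hm1 : 1 ≤ m := by omega
    have hm0 : (0 : ℝ) < m := by exact_mod_cast hm1
    have hd0 : (0 : ℝ) < d := by exact_mod_cast hd
    have h := key_logGamma m d hm0.le (by exact_mod_cast hmd) hd0
    have h' : (1 / (m : ℝ)) * Real.log (Real.Gamma (1 + (m : ℝ) / 2)) ≤
        (1 / (d : ℝ)) * Real.log (Real.Gamma (1 + (d : ℝ) / 2)) := by
      rw [div_mul_eq_mul_div, div_mul_eq_mul_div, div_le_div_iff₀ hm0 hd0]
      nlinarith
    rw [← hcast]
    rw [Real.rpow_def_of_pos hgm, Real.rpow_def_of_pos hgd]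
    exact Real.exp_le_exp.2 (by rw [mul_comm, mul_comm (Real.log _)]; exact h')
end

section
/- Let m ≥ 1 be an integer, γ > 0, μ > 0, and for each positive integer q let a_q ≥ 0 be given with a_q = 0 for q > m. Then ∑_{ℓ=1}^{∞} ((−1)^{ℓ−1} γ^ℓ / ℓ!) ∑_{q_1,…,q_ℓ ≥ 0, q_1+⋯+q_ℓ = m} ∏_{i=1}^{ℓ} b_{q_i} = −e^{−γμ} ∑_{p=1}^{m} ((−1)^p γ^p / p!) ∑_{q_1,…,q_p > 0, q_1+⋯+q_p = m} ∏_{i=1}^{p} a_{q_i}, where b_0 = μ and b_q = a_q for q ≥ 1, and the series on the left converges absolutely. -/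
open Real Finset

lemma tuple_sum_step (f : ℕ → ℝ) (n m : ℕ) :
    ∑ t ∈ Finset.Nat.antidiagonalTuple (n + 1) m, ∏ i, f (t i)
      = ∑ ij ∈ Finset.HasAntidiagonal.antidiagonal m, f ij.1 *
          ∑ t ∈ Finset.Nat.antidiagonalTuple n ij.2, ∏ i, f (t i) := by
  simp_rw [Finset.mul_sum, Finset.sum_sigma']
  refine Finset.sum_nbij' (fun t => ⟨(t 0, ∑ i, Fin.tail t i), Fin.tail t⟩)
    (fun x => Fin.cons x.1.1 x.2) ?_ ?_ ?_ ?_ ?_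
  · intro t ht
    rw [Finset.Nat.mem_antidiagonalTuple] at ht
    simp only [Finset.mem_sigma, Finset.Nat.mem_antidiagonalTuple, Finset.HasAntidiagonal.mem_antidiagonal]
    exact ⟨by rw [← ht, Fin.sum_univ_succ]; rfl, trivial⟩
  · rintro ⟨⟨x, y⟩, u⟩ h
    simp only [Finset.mem_sigma, Finset.Nat.mem_antidiagonalTuple, Finset.HasAntidiagonal.mem_antidiagonal] at h
    rw [Finset.Nat.mem_antidiagonalTuple, Fin.sum_cons, h.2, h.1]
  · intro t ht
    exact Fin.cons_self_tail t
  · rintro ⟨⟨x, y⟩, u⟩ h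
    simp only [Finset.mem_sigma, Finset.Nat.mem_antidiagonalTuple, Finset.HasAntidiagonal.mem_antidiagonal] at h
    simp [Fin.tail_cons, h.2]
  · intro t ht
    rw [Fin.prod_univ_succ]
    rfl

lemma tuple_sum_eq_coeff (f : ℕ → ℝ) : ∀ n m : ℕ,
    ∑ t ∈ Finset.Nat.antidiagonalTuple n m, ∏ i, f (t i)
      = PowerSeries.coeff m ((PowerSeries.mk f) ^ n) := by
  intro n
  induction n with
  | zero =>
    intro m
    rw [pow_zero, PowerSeries.coeff_one]
    cases m with
    | zero => simp
    | succ m => simp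
  | succ n ih =>
    intro m
    rw [tuple_sum_step, pow_succ', PowerSeries.coeff_mul]
    refine Finset.sum_congr rfl fun ij _ => ?_
    rw [PowerSeries.coeff_mk, ih ij.2]

noncomputable def Upos (a : ℕ → ℝ) (p m : ℕ) : ℝ :=
  ∑ t ∈ (Finset.Nat.antidiagonalTuple p m).filter (fun t => ∀ i, 0 < t i), ∏ i, a (t i)

lemma Upos_eq_zero_of_lt (a : ℕ → ℝ) {p m : ℕ} (h : m < p) : Upos a p m = 0 := by
  refine Finset.sum_eq_zero fun t ht => ?_
  rw [Finset.mem_filter, Finset.Nat.mem_antidiagonalTuple] at ht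
  exfalso
  have : (Finset.univ : Finset (Fin p)).card ≤ ∑ i, t i := by
    simpa using Finset.card_nsmul_le_sum Finset.univ t 1 (fun i _ => ht.2 i)
  simp only [Finset.card_univ, Fintype.card_fin, ht.1] at this
  omega

lemma Upos_zero (a : ℕ → ℝ) {m : ℕ} (hm : 1 ≤ m) : Upos a 0 m = 0 := by
  cases m with
  | zero => omega
  | succ m => simp [Upos]

lemma coeff_pow_pos_part (a : ℕ → ℝ) (m : ℕ) (p : ℕ) :
    PowerSeries.coeff m ((PowerSeries.mk (fun q => if q = 0 then (0:ℝ) else a q)) ^ p)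
      = Upos a p m := by
  rw [← tuple_sum_eq_coeff, Upos]
  rw [← Finset.sum_filter_of_ne (p := fun t : Fin p → ℕ => ∀ i, 0 < t i)]
  · refine Finset.sum_congr rfl fun t ht => ?_
    rw [Finset.mem_filter] at ht
    refine Finset.prod_congr rfl fun i _ => ?_
    exact if_neg (ht.2 i).ne'
  · intro t _ hne
    by_contra h
    push_neg at h
    obtain ⟨i, hi⟩ := h
    exact hne (Finset.prod_eq_zero (Finset.mem_univ i) (by simp [Nat.le_zero.mp hi]))

lemma T_eq (m : ℕ) (hm : 1 ≤ m) (μ : ℝ) (a : ℕ → ℝ) (n : ℕ) :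
    ∑ t ∈ Finset.Nat.antidiagonalTuple n m, ∏ i, (if t i = 0 then μ else a (t i))
      = ∑ p ∈ Finset.Icc 1 m, (n.choose p : ℝ) * μ ^ (n - p) * Upos a p m := by
  have h1 : PowerSeries.mk (fun q => if q = 0 then μ else a q)
      = PowerSeries.C μ + PowerSeries.mk (fun q => if q = 0 then (0:ℝ) else a q) := by
    ext k
    cases k <;> simp [PowerSeries.coeff_mk, PowerSeries.coeff_C]
  have key : ∀ p : ℕ, PowerSeries.coeff m
      (((PowerSeries.mk (fun q => if q = 0 then (0:ℝ) else a q)) ^ p)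
        * (PowerSeries.C μ) ^ (n - p) * (n.choose p : PowerSeries ℝ))
      = (n.choose p : ℝ) * μ ^ (n - p) * Upos a p m := by
    intro p
    rw [← map_pow, mul_assoc, ← map_natCast (PowerSeries.C (R := ℝ)) (n.choose p), ← map_mul,
      PowerSeries.coeff_mul_C, coeff_pow_pos_part a m p]
    ring
  calc ∑ t ∈ Finset.Nat.antidiagonalTuple n m, ∏ i, (if t i = 0 then μ else a (t i))
      = ∑ p ∈ Finset.range (n + 1), (n.choose p : ℝ) * μ ^ (n - p) * Upos a p m := by
        have h0 := tuple_sum_eq_coeff (fun q => if q = 0 then μ else a q) n m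
        beta_reduce at h0
        rw [h0, h1, add_comm, add_pow, map_sum]
        exact Finset.sum_congr rfl fun p _ => key p
    _ = ∑ p ∈ Finset.range (n + m + 2), (n.choose p : ℝ) * μ ^ (n - p) * Upos a p m := by
        refine Finset.sum_subset (by intro x; simp; omega) fun p _ hp => ?_
        rw [Finset.mem_range, not_lt] at hp
        rw [Nat.choose_eq_zero_of_lt (by omega)]
        simp
    _ = ∑ p ∈ Finset.Icc 1 m, (n.choose p : ℝ) * μ ^ (n - p) * Upos a p m := by
        refine (Finset.sum_subset (by intro x; simp; omega) fun p hp hp' => ?_).symm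
        simp only [Finset.mem_Icc, not_and, not_le] at hp'
        rcases Nat.eq_zero_or_pos p with h | h
        · rw [h, Upos_zero a hm]; ring
        · rw [Upos_eq_zero_of_lt a (hp' h)]; ring

lemma exp_column (γ μ : ℝ) (hγ : 0 < γ) (hμ : 0 < μ) (p : ℕ) (hp : 1 ≤ p) (c : ℝ) :
    Summable (fun ℓ : ℕ => (-1:ℝ)^ℓ * γ^(ℓ+1) / ((ℓ+1).factorial : ℝ) *
        (((ℓ+1).choose p : ℝ) * μ^(ℓ+1-p) * c)) ∧
    Summable (fun ℓ : ℕ => |(-1:ℝ)^ℓ * γ^(ℓ+1) / ((ℓ+1).factorial : ℝ) *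
        (((ℓ+1).choose p : ℝ) * μ^(ℓ+1-p) * c)|) ∧
    (∑' ℓ : ℕ, (-1:ℝ)^ℓ * γ^(ℓ+1) / ((ℓ+1).factorial : ℝ) *
        (((ℓ+1).choose p : ℝ) * μ^(ℓ+1-p) * c))
      = -((-1:ℝ)^p * γ^p / (p.factorial : ℝ)) * Real.exp (-(γ*μ)) * c := by
  set g : ℕ → ℝ := fun ℓ => (-1:ℝ)^ℓ * γ^(ℓ+1) / ((ℓ+1).factorial : ℝ) *
      (((ℓ+1).choose p : ℝ) * μ^(ℓ+1-p) * c) with hg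
  obtain ⟨p', rfl⟩ : ∃ p', p = p' + 1 := ⟨p - 1, by omega⟩
  set i : ℕ → ℕ := fun k => k + p' with hi
  have hinj : Function.Injective i := fun x y h => by simpa [hi] using h
  have hsupp : ∀ ℓ ∉ Set.range i, g ℓ = 0 := by
    intro ℓ hℓ
    have hℓ' : ℓ < p' := by
      by_contra h
      exact hℓ ⟨ℓ - p', by simp [hi]; omega⟩
    have : ℓ + 1 < p' + 1 := by omega
    simp [hg, Nat.choose_eq_zero_of_lt this]
  have hcomp : ∀ k, g (i k) = (-((-1:ℝ)^(p'+1) * γ^(p'+1) / ((p'+1).factorial : ℝ)) * c)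
      * ((-(γ*μ))^k / (k.factorial : ℝ)) := by
    intro k
    have h1 : i k + 1 = (p' + 1) + k := by simp [hi]; omega
    have hcf : (((p'+1) + k).choose (p'+1) : ℝ) * ((p'+1).factorial : ℝ) * (k.factorial : ℝ)
        = (((p'+1) + k).factorial : ℝ) := by
      have := Nat.choose_mul_factorial_mul_factorial (Nat.le_add_right (p'+1) k)
      have h2 : (p' + 1) + k - (p' + 1) = k := by omega
      rw [h2] at this
      exact_mod_cast congrArg (Nat.cast : ℕ → ℝ) this
    have h3 : i k + 1 - (p' + 1) = k := by simp [hi]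
    have hch : (((p'+1) + k).choose (p'+1) : ℝ)
        = (((p'+1) + k).factorial : ℝ) / (((p'+1).factorial : ℝ) * (k.factorial : ℝ)) := by
      rw [eq_div_iff (by positivity), ← hcf]; ring
    have hik : i k = k + p' := rfl
    rw [hg]
    simp only [h1, h3, hch, hik]
    rw [show k + p' + 1 = p' + 1 + k by omega, hch, show p' + 1 + k - (p' + 1) = k from by omega, show k + p' = p' + k by omega,
      pow_add ((-1:ℝ)) p' k, pow_add γ (p'+1) k, pow_succ ((-1:ℝ)) p',
      neg_pow (γ*μ) k, mul_pow]
    have hfac1 : (((p'+1) + k).factorial : ℝ) ≠ 0 := by positivity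
    have hfac2 : ((p'+1).factorial : ℝ) ≠ 0 := by positivity
    have hfac3 : ((k).factorial : ℝ) ≠ 0 := by positivity
    field_simp
  have hsum_h : Summable (fun k : ℕ => (-((-1:ℝ)^(p'+1) * γ^(p'+1) / ((p'+1).factorial : ℝ)) * c)
      * ((-(γ*μ))^k / (k.factorial : ℝ))) :=
    (Real.summable_pow_div_factorial (-(γ*μ))).mul_left _
  have hsum_g : Summable g := by
    rw [← hinj.summable_iff hsupp]
    exact hsum_h.congr (fun k => (hcomp k).symm)
  have habs : Summable (fun ℓ => |g ℓ|) := by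
    rw [← hinj.summable_iff (f := fun ℓ => |g ℓ|)
      (by intro x hx; show |g x| = 0; rw [hsupp x hx, abs_zero])]
    refine (((Real.summable_pow_div_factorial (γ*μ)).mul_left
      (|(-((-1:ℝ)^(p'+1) * γ^(p'+1) / ((p'+1).factorial : ℝ)) * c)|)).congr (fun k => ?_))
    show _ = |g (i k)|
    rw [hcomp k]
    simp [abs_mul, abs_div, abs_pow, abs_of_pos (mul_pos hγ hμ), mul_assoc]
  refine ⟨hsum_g, habs, ?_⟩
  rw [← hinj.tsum_eq (f := g) (fun x hx => by by_contra h; exact hx (hsupp x h))]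
  calc ∑' k, g (i k) = ∑' k, (-((-1:ℝ)^(p'+1) * γ^(p'+1) / ((p'+1).factorial : ℝ)) * c)
      * ((-(γ*μ))^k / (k.factorial : ℝ)) := tsum_congr hcomp
    _ = (-((-1:ℝ)^(p'+1) * γ^(p'+1) / ((p'+1).factorial : ℝ)) * c) * Real.exp (-(γ*μ)) := by
        rw [tsum_mul_left, Real.exp_eq_exp_ℝ, NormedSpace.exp_eq_tsum_div]
    _ = -((-1:ℝ)^(p'+1) * γ^(p'+1) / ((p'+1).factorial : ℝ)) * Real.exp (-(γ*μ)) * c := by ring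

/-- Evaluation of the alternating series over tuples of nonnegative integers summing to `m`:
with `b_0 = μ`, `b_q = a_q` for `q ≥ 1`, and `a_q = 0` for `q > m`, one has
`∑_{ℓ≥1} ((−1)^{ℓ−1} γ^ℓ/ℓ!) ∑_{q_1+⋯+q_ℓ=m, q_i≥0} ∏ b_{q_i}
  = −e^{−γμ} ∑_{p=1}^{m} ((−1)^p γ^p/p!) ∑_{q_1+⋯+q_p=m, q_i>0} ∏ a_{q_i}`,
and the series converges absolutely. -/
theorem alternating_tuple_series (m : ℕ) (hm : 1 ≤ m) (γ μ : ℝ) (hγ : 0 < γ) (hμ : 0 < μ)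
    (a : ℕ → ℝ) (ha : ∀ q, 0 ≤ a q) (ha' : ∀ q, m < q → a q = 0) :
    Summable (fun ℓ : ℕ =>
        |(-1 : ℝ) ^ ℓ * γ ^ (ℓ + 1) / ((ℓ + 1).factorial : ℝ) *
          ∑ t ∈ Finset.Nat.antidiagonalTuple (ℓ + 1) m,
            ∏ i, (if t i = 0 then μ else a (t i))|) ∧
      (∑' ℓ : ℕ,
          (-1 : ℝ) ^ ℓ * γ ^ (ℓ + 1) / ((ℓ + 1).factorial : ℝ) *
            ∑ t ∈ Finset.Nat.antidiagonalTuple (ℓ + 1) m,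
              ∏ i, (if t i = 0 then μ else a (t i))) =
        -Real.exp (-(γ * μ)) *
          ∑ p ∈ Finset.Icc 1 m,
            (-1 : ℝ) ^ p * γ ^ p / (p.factorial : ℝ) *
              ∑ t ∈ (Finset.Nat.antidiagonalTuple p m).filter (fun t => ∀ i, 0 < t i),
                ∏ i, a (t i) := by
  have hterm : ∀ ℓ : ℕ, (-1 : ℝ) ^ ℓ * γ ^ (ℓ + 1) / ((ℓ + 1).factorial : ℝ) *
      ∑ t ∈ Finset.Nat.antidiagonalTuple (ℓ + 1) m, ∏ i, (if t i = 0 then μ else a (t i))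
      = ∑ p ∈ Finset.Icc 1 m, (-1:ℝ)^ℓ * γ^(ℓ+1) / ((ℓ+1).factorial : ℝ) *
          (((ℓ+1).choose p : ℝ) * μ^(ℓ+1-p) * Upos a p m) := by
    intro ℓ
    rw [T_eq m hm μ a (ℓ+1), Finset.mul_sum]
  have hcol := fun p (hp : p ∈ Finset.Icc 1 m) =>
    exp_column γ μ hγ hμ p (Finset.mem_Icc.mp hp).1 (Upos a p m)
  constructor
  · refine Summable.of_nonneg_of_le (fun ℓ => abs_nonneg _) (fun ℓ => ?_)
      (summable_sum fun p hp => (hcol p hp).2.1)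
    rw [hterm ℓ]
    exact Finset.abs_sum_le_sum_abs _ _
  · rw [tsum_congr hterm, Summable.tsum_finsetSum (fun p hp => (hcol p hp).1), Finset.mul_sum]
    refine Finset.sum_congr rfl fun p hp => ?_
    have hU : (∑ t ∈ (Finset.Nat.antidiagonalTuple p m).filter (fun t => ∀ i, 0 < t i),
        ∏ i, a (t i)) = Upos a p m := rfl
    rw [hU, (hcol p hp).2.2]
    ring
end
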